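/- Let K be a field of characteristic zero and G a free group. The short exact sequence 0 → IG/(IG)² ⊗ IG/(IG)² → IG/(IG)³ → IG/(IG)² → 0 is exact, where the first map is induced by multiplication ([x]-[1], [y]-[1]) ↦ ([x]-[1])·([y]-[1]) and the second is the natural projection. -/

import Mathlib

open scoped TensorProduct

/-- The augmentation map `K[G] → K`. -/
noncomputable def aug (K G : Type) [Field K] [Group G] : MonoidAlgebra K G →ₐ[K] K :=
  MonoidAlgebra.lift K K G 1

/-- The augmentation ideal `IG ⊆ K[G]`, as a `K`-submodule. -/
noncomputable def Iaug (K G : Type) [Field K] [Group G] : Submodule K (MonoidAlgebra K G) :=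
  LinearMap.ker (aug K G).toLinearMap

/-- The square `(IG)²` of the augmentation ideal. -/
noncomputable def Iaug2 (K G : Type) [Field K] [Group G] : Submodule K (MonoidAlgebra K G) :=
  Iaug K G * Iaug K G

/-- The cube `(IG)³` of the augmentation ideal. -/
noncomputable def Iaug3 (K G : Type) [Field K] [Group G] : Submodule K (MonoidAlgebra K G) :=
  Iaug K G * Iaug K G * Iaug K G

lemma mul_mem_Iaug {K G : Type} [Field K] [Group G] (a b : MonoidAlgebra K G)
    (ha : a ∈ Iaug K G) (hb : b ∈ Iaug K G) : a * b ∈ Iaug K G := by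
  simp only [Iaug, LinearMap.mem_ker, AlgHom.toLinearMap_apply, map_mul] at *
  rw [ha, zero_mul]

/-- `IG/(IG)²`, as a quotient of the module `IG`. -/
noncomputable abbrev IaugMod2 (K G : Type) [Field K] [Group G] :=
  Iaug K G ⧸ (Submodule.comap (Iaug K G).subtype (Iaug2 K G))

/-- `IG/(IG)³` (the second Passi quotient `P₂(G)`), as a quotient of the module `IG`. -/
noncomputable abbrev IaugMod3 (K G : Type) [Field K] [Group G] :=
  Iaug K G ⧸ (Submodule.comap (Iaug K G).subtype (Iaug3 K G))

section Generic
variable {K G : Type} [Field K] [Group G]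

lemma aug_single (g : G) (c : K) : aug K G (MonoidAlgebra.single g c) = c := by
  simp [aug, MonoidAlgebra.lift_single]

lemma aug_apply (a : MonoidAlgebra K G) : aug K G a = a.coeff.sum fun _ c => c := by
  simp [aug, MonoidAlgebra.lift_apply]

lemma mem_Iaug_iff {a : MonoidAlgebra K G} : a ∈ Iaug K G ↔ aug K G a = 0 := by
  simp [Iaug, LinearMap.mem_ker]

noncomputable def elt (K : Type) {G : Type} [Field K] [Group G] (g : G) : Iaug K G :=
  ⟨MonoidAlgebra.single g 1 - 1, by
    rw [mem_Iaug_iff, map_sub, aug_single, map_one, sub_self]⟩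

noncomputable def Dmap (K : Type) {G : Type} [Field K] [Group G] (g : G) : IaugMod2 K G :=
  Submodule.Quotient.mk (elt K g)

lemma Iaug2_le : Iaug2 K G ≤ Iaug K G :=
  Submodule.mul_le.2 fun a ha b hb => mul_mem_Iaug a b ha hb

lemma D_one : (Dmap K (1:G) : IaugMod2 K G) = 0 := by
  have h : (elt K 1 : Iaug K G) = 0 := by
    apply Subtype.ext
    simp [elt, MonoidAlgebra.one_def]
  simp [Dmap, h]

lemma D_mul (g h : G) : (Dmap K (g * h) : IaugMod2 K G) = Dmap K g + Dmap K h := by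
  rw [← sub_eq_zero]
  have h1 : Dmap K (g*h) - (Dmap K g + Dmap K h)
      = Submodule.Quotient.mk (elt K (g*h) - elt K g - elt K h) := by
    simp only [Dmap, ← Submodule.Quotient.mk_sub, ← Submodule.Quotient.mk_add]
    congr 1
    abel
  rw [h1, Submodule.Quotient.mk_eq_zero, Submodule.mem_comap]
  have hval : ((elt K (g*h) - elt K g - elt K h : Iaug K G) : MonoidAlgebra K G)
      = ((elt K g : Iaug K G) : MonoidAlgebra K G) * ((elt K h : Iaug K G) : MonoidAlgebra K G) := by
    simp only [AddSubgroupClass.coe_sub, elt]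
    rw [sub_mul, one_mul, mul_sub, mul_one, MonoidAlgebra.single_mul_single, one_mul]
    abel
  rw [Submodule.subtype_apply, hval]
  exact Submodule.mul_mem_mul (elt K g).2 (elt K h).2

lemma D_inv (g : G) : (Dmap K g⁻¹ : IaugMod2 K G) = - Dmap K g := by
  have h := D_mul (K := K) g g⁻¹
  rw [mul_inv_cancel, D_one] at h
  exact eq_neg_of_add_eq_zero_right h.symm

noncomputable def mq (K : Type) {G : Type} [Field K] [Group G] :
    MonoidAlgebra K G →ₗ[K] IaugMod2 K G :=
  (Finsupp.lsum K fun g => LinearMap.toSpanSingleton K _ (Dmap K g)) ∘ₗ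
    (MonoidAlgebra.coeffLinearEquiv K).toLinearMap

lemma mq_single (g : G) (c : K) :
    mq K (MonoidAlgebra.single g c) = c • Dmap K g := by
  show Finsupp.lsum K (fun g => LinearMap.toSpanSingleton K _ (Dmap K g)) (Finsupp.single g c) = _
  rw [Finsupp.lsum_single, LinearMap.toSpanSingleton_apply]

lemma mq_eq_mk (a : Iaug K G) :
    mq K a.1 = Submodule.Quotient.mk a := by
  set b : G →₀ K := a.1.coeff with hb
  set s : Iaug K G := b.sum (fun g c => c • elt K g) with hs
  have hcar : ((Iaug K G).subtype) s = a.1 := by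
    rw [hs, map_finsuppSum]
    simp only [map_smul, Submodule.subtype_apply]
    have he : ∀ g : G, ((elt K g : Iaug K G) : MonoidAlgebra K G)
        = MonoidAlgebra.single g 1 - 1 := fun g => rfl
    simp only [he, smul_sub]
    rw [Finsupp.sum_sub]
    have h3 : (b.sum fun g c => c • MonoidAlgebra.single g (1:K)) = MonoidAlgebra.ofCoeff b := by
      have hcg : (b.sum fun g c => c • MonoidAlgebra.single g (1:K))
          = b.sum fun g c => MonoidAlgebra.single g c :=
        Finsupp.sum_congr fun g _ => by rw [MonoidAlgebra.smul_single, smul_eq_mul, mul_one]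
      rw [hcg, hb, MonoidAlgebra.sum_coeff_single]
    rw [h3]
    have h4 : (b.sum fun _ c => c • (1 : MonoidAlgebra K G)) = 0 := by
      rw [Finsupp.sum, ← Finset.sum_smul]
      have haug : (b.sum fun _ c => c) = 0 := by
        have h5 := mem_Iaug_iff.1 a.2
        rw [aug_apply] at h5; exact h5
      rw [Finsupp.sum] at haug
      rw [haug, zero_smul]
    rw [h4, sub_zero, hb]
  have hse : s = a := Subtype.ext hcar
  have h2 : mq K a.1 = Submodule.Quotient.mk s := by
    rw [hs]
    rw [show (Submodule.Quotient.mk (b.sum fun g c => c • elt K g)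
        : IaugMod2 K G)
      = (Submodule.comap (Iaug K G).subtype (Iaug2 K G)).mkQ
          (b.sum fun g c => c • elt K g) from rfl]
    rw [map_finsuppSum]
    simp only [map_smul, Submodule.mkQ_apply]
    rw [mq, LinearMap.comp_apply, Finsupp.lsum_apply]
    rfl
  rw [h2, hse]

lemma mq_zero_of_Iaug2 {b : MonoidAlgebra K G} (hb : b ∈ Iaug2 K G) : mq K b = 0 := by
  have hbI : b ∈ Iaug K G := Iaug2_le hb
  have h := mq_eq_mk (⟨b, hbI⟩ : Iaug K G)
  rw [h, Submodule.Quotient.mk_eq_zero]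
  exact hb

end Generic

section Free
variable (K : Type) [Field K] (X : Type)

/-- The auxiliary group `T × FreeGroup X` used to construct the 2-cocycle `tc`. -/
abbrev Co : Type :=
  ((IaugMod2 K (FreeGroup X)) ⊗[K] (IaugMod2 K (FreeGroup X))) × FreeGroup X

noncomputable instance : Group (Co K X) where
  mul a b := (a.1 + b.1 + Dmap K a.2 ⊗ₜ[K] Dmap K b.2, a.2 * b.2)
  one := ((0 : (IaugMod2 K (FreeGroup X)) ⊗[K] (IaugMod2 K (FreeGroup X))), 1)
  inv a := (Dmap K a.2 ⊗ₜ[K] Dmap K a.2 - a.1, a.2⁻¹)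
  mul_assoc a b c := by
    refine Prod.ext ?_ (mul_assoc _ _ _)
    show (a.1 + b.1 + Dmap K a.2 ⊗ₜ[K] Dmap K b.2) + c.1
          + Dmap K (a.2 * b.2) ⊗ₜ[K] Dmap K c.2
        = a.1 + (b.1 + c.1 + Dmap K b.2 ⊗ₜ[K] Dmap K c.2)
          + Dmap K a.2 ⊗ₜ[K] Dmap K (b.2 * c.2)
    rw [D_mul, D_mul, TensorProduct.add_tmul, TensorProduct.tmul_add]
    abel
  one_mul a := by
    refine Prod.ext ?_ (one_mul _)
    show 0 + a.1 + Dmap K (1 : FreeGroup X) ⊗ₜ[K] Dmap K a.2 = a.1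
    rw [D_one, TensorProduct.zero_tmul, zero_add, add_zero]
  mul_one a := by
    refine Prod.ext ?_ (mul_one _)
    show a.1 + 0 + Dmap K a.2 ⊗ₜ[K] Dmap K (1 : FreeGroup X) = a.1
    rw [D_one, TensorProduct.tmul_zero, add_zero, add_zero]
  inv_mul_cancel a := by
    refine Prod.ext ?_ (inv_mul_cancel _)
    show (Dmap K a.2 ⊗ₜ[K] Dmap K a.2 - a.1) + a.1 + Dmap K a.2⁻¹ ⊗ₜ[K] Dmap K a.2
        = 0
    rw [D_inv, TensorProduct.neg_tmul]
    abel

noncomputable def phi : FreeGroup X →* Co K X :=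
  FreeGroup.lift fun x => ((0, FreeGroup.of x) : Co K X)

lemma phi_snd (g : FreeGroup X) : (phi K X g).2 = g := by
  have hp2 : ∀ a b : Co K X, (a * b).2 = a.2 * b.2 := fun a b => rfl
  let p2 : Co K X →* FreeGroup X := MonoidHom.mk' Prod.snd (fun a b => rfl)
  have h : p2.comp (phi K X) = MonoidHom.id (FreeGroup X) := by
    refine FreeGroup.ext_hom _ _ fun x => ?_
    simp [phi, p2]
  exact DFunLike.congr_fun h g

noncomputable def tc (g : FreeGroup X) :
    (IaugMod2 K (FreeGroup X)) ⊗[K] (IaugMod2 K (FreeGroup X)) :=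
  (phi K X g).1

lemma tc_cocycle (g h : FreeGroup X) :
    tc K X (g * h) = tc K X g + tc K X h + Dmap K g ⊗ₜ[K] Dmap K h := by
  have hm := congrArg Prod.fst (map_mul (phi K X) g h)
  have h1 : ((phi K X g) * (phi K X h)).1
      = (phi K X g).1 + (phi K X h).1
        + Dmap K (phi K X g).2 ⊗ₜ[K] Dmap K (phi K X h).2 := rfl
  rw [h1, phi_snd, phi_snd] at hm
  exact hm

noncomputable def Lmap : MonoidAlgebra K (FreeGroup X) →ₗ[K]
    (IaugMod2 K (FreeGroup X)) ⊗[K] (IaugMod2 K (FreeGroup X)) :=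
  (Finsupp.lsum K fun g => LinearMap.toSpanSingleton K _ (tc K X g)) ∘ₗ
    (MonoidAlgebra.coeffLinearEquiv K).toLinearMap

lemma L_single (g : FreeGroup X) (c : K) :
    Lmap K X (MonoidAlgebra.single g c) = c • tc K X g := by
  show Finsupp.lsum K (fun g => LinearMap.toSpanSingleton K _ (tc K X g)) (Finsupp.single g c) = _
  rw [Finsupp.lsum_single, LinearMap.toSpanSingleton_apply]

abbrev toMA {K X : Type} [Field K] (y : MonoidAlgebra K (FreeGroup X)) :
    MonoidAlgebra K (FreeGroup X) := y

lemma Lkey (a b : MonoidAlgebra K (FreeGroup X)) :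
    Lmap K X (a * b) = aug K (FreeGroup X) b • Lmap K X a
      + aug K (FreeGroup X) a • Lmap K X b + (mq K a) ⊗ₜ[K] (mq K b) := by
  refine MonoidAlgebra.induction_linear
    (motive := fun y : MonoidAlgebra K (FreeGroup X) =>
      Lmap K X (toMA y * b)
        = aug K (FreeGroup X) b • Lmap K X y
          + aug K (FreeGroup X) (toMA y) • Lmap K X b
          + (mq K y) ⊗ₜ[K] (mq K b)) a ?_ ?_ ?_
  · simp only [toMA]
    simp
  · intro f g hf hg
    simp only [toMA] at hf hg ⊢
    simp only [add_mul, map_add, hf, hg, add_smul, smul_add, TensorProduct.add_tmul]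
    abel
  · intro g c
    simp only [toMA]
    refine MonoidAlgebra.induction_linear
      (motive := fun y : MonoidAlgebra K (FreeGroup X) =>
        Lmap K X (MonoidAlgebra.single g c * toMA y)
          = aug K (FreeGroup X) (toMA y) • Lmap K X (MonoidAlgebra.single g c)
            + aug K (FreeGroup X) (MonoidAlgebra.single g c) • Lmap K X y
            + (mq K (MonoidAlgebra.single g c)) ⊗ₜ[K] (mq K y)) b ?_ ?_ ?_
    · simp only [toMA]
      simp
    · intro f₁ f₂ h1 h2
      simp only [toMA] at h1 h2 ⊢
      simp only [mul_add, map_add, h1, h2, add_smul, smul_add, TensorProduct.tmul_add]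
      abel
    · intro h d
      simp only [toMA]
      rw [show (MonoidAlgebra.single g c * MonoidAlgebra.single h d
            : MonoidAlgebra K (FreeGroup X))
          = MonoidAlgebra.single (g * h) (c * d) from MonoidAlgebra.single_mul_single _ _ _ _]
      rw [L_single, L_single, L_single, mq_single, mq_single, aug_single, aug_single,
        tc_cocycle, ← TensorProduct.smul_tmul', TensorProduct.tmul_smul]
      module

lemma L_of_I3 {c : MonoidAlgebra K (FreeGroup X)} (hc : c ∈ Iaug3 K (FreeGroup X)) :
    Lmap K X c = 0 := by
  unfold Iaug3 at hc
  rw [mul_assoc] at hc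
  refine Submodule.mul_induction_on hc ?_ ?_
  · intro x hx y hy
    have hyI : y ∈ Iaug K (FreeGroup X) := Iaug2_le hy
    rw [Lkey, mem_Iaug_iff.1 hyI, mem_Iaug_iff.1 hx, zero_smul, zero_smul,
      mq_zero_of_Iaug2 hy, TensorProduct.tmul_zero]
    simp
  · intro u v hu hv
    rw [map_add, hu, hv, add_zero]

noncomputable def Lbar : IaugMod3 K (FreeGroup X) →ₗ[K]
    (IaugMod2 K (FreeGroup X)) ⊗[K] (IaugMod2 K (FreeGroup X)) :=
  Submodule.liftQ _ (Lmap K X ∘ₗ (Iaug K (FreeGroup X)).subtype) (by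
    intro x hx
    rw [LinearMap.mem_ker, LinearMap.comp_apply]
    exact L_of_I3 K X (Submodule.mem_comap.1 hx))

lemma Lbar_mk (a : Iaug K (FreeGroup X)) :
    Lbar K X (Submodule.Quotient.mk a) = Lmap K X a.1 :=
  Submodule.liftQ_apply _ _ _

end Free

/-- for a free group `G`, the sequence
`0 → IG/(IG)² ⊗ IG/(IG)² → IG/(IG)³ → IG/(IG)² → 0` is exact, where the first map `μ` is
induced by multiplication and the second map `π` is the natural projection. -/
theorem stmt_15 (K : Type) [Field K] [CharZero K] (X : Type)
    (μ : (IaugMod2 K (FreeGroup X)) ⊗[K] (IaugMod2 K (FreeGroup X)) →ₗ[K]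
      IaugMod3 K (FreeGroup X))
    (hμ : ∀ a b : Iaug K (FreeGroup X),
      μ (Submodule.Quotient.mk a ⊗ₜ[K] Submodule.Quotient.mk b)
        = Submodule.Quotient.mk
            ⟨(a : MonoidAlgebra K (FreeGroup X)) * (b : MonoidAlgebra K (FreeGroup X)),
              mul_mem_Iaug _ _ a.2 b.2⟩)
    (π : IaugMod3 K (FreeGroup X) →ₗ[K] IaugMod2 K (FreeGroup X))
    (hπ : ∀ a : Iaug K (FreeGroup X),
      π (Submodule.Quotient.mk a) = Submodule.Quotient.mk a) :
    Function.Injective μ ∧ LinearMap.range μ = LinearMap.ker π ∧ Function.Surjective π := by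
  have hπμ : ∀ w, π (μ w) = 0 := by
    have hc : π ∘ₗ μ = 0 := by
      apply TensorProduct.ext'
      intro x y
      obtain ⟨a, rfl⟩ := Submodule.Quotient.mk_surjective _ x
      obtain ⟨b, rfl⟩ := Submodule.Quotient.mk_surjective _ y
      rw [LinearMap.comp_apply, hμ, hπ, LinearMap.zero_apply,
        Submodule.Quotient.mk_eq_zero, Submodule.mem_comap]
      exact Submodule.mul_mem_mul a.2 b.2
    intro w
    rw [← LinearMap.comp_apply, hc, LinearMap.zero_apply]
  refine ⟨?_, ?_, ?_⟩
  · -- injectivity via the left inverse Lbar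
    have hid : ∀ w, Lbar K X (μ w) = w := by
      have hcomp : (Lbar K X) ∘ₗ μ = LinearMap.id := by
        apply TensorProduct.ext'
        intro x y
        obtain ⟨a, rfl⟩ := Submodule.Quotient.mk_surjective _ x
        obtain ⟨b, rfl⟩ := Submodule.Quotient.mk_surjective _ y
        rw [LinearMap.comp_apply, hμ, Lbar_mk, LinearMap.id_apply]
        show Lmap K X ((a : MonoidAlgebra K (FreeGroup X))
            * (b : MonoidAlgebra K (FreeGroup X))) = _
        rw [Lkey, mem_Iaug_iff.1 a.2, mem_Iaug_iff.1 b.2, zero_smul, zero_smul,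
          zero_add, zero_add, mq_eq_mk, mq_eq_mk]
      intro w
      rw [← LinearMap.comp_apply, hcomp, LinearMap.id_apply]
    intro u v h
    rw [← hid u, ← hid v, h]
  · -- range μ = ker π
    ext z
    constructor
    · rintro ⟨w, rfl⟩
      rw [LinearMap.mem_ker]
      exact hπμ w
    · intro hz
      obtain ⟨a, rfl⟩ := Submodule.Quotient.mk_surjective _ z
      rw [LinearMap.mem_ker, hπ] at hz
      have ha2 : (a : MonoidAlgebra K (FreeGroup X)) ∈ Iaug2 K (FreeGroup X) := by
        rwa [Submodule.Quotient.mk_eq_zero, Submodule.mem_comap] at hz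
      have claim : ∀ x : MonoidAlgebra K (FreeGroup X), x ∈ Iaug2 K (FreeGroup X) →
          x ∈ Iaug K (FreeGroup X) ∧ ∀ h : x ∈ Iaug K (FreeGroup X),
            (Submodule.Quotient.mk (⟨x, h⟩ : Iaug K (FreeGroup X))
              : IaugMod3 K (FreeGroup X)) ∈ LinearMap.range μ := by
        intro x hx
        refine Submodule.mul_induction_on hx ?_ ?_
        · intro m hm n hn
          refine ⟨mul_mem_Iaug _ _ hm hn, fun hmem => ?_⟩
          exact ⟨Submodule.Quotient.mk ⟨m, hm⟩ ⊗ₜ[K] Submodule.Quotient.mk ⟨n, hn⟩,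
            hμ ⟨m, hm⟩ ⟨n, hn⟩⟩
        · rintro x y ⟨hxI, hxr⟩ ⟨hyI, hyr⟩
          refine ⟨add_mem hxI hyI, fun hmem => ?_⟩
          have hsplit : (Submodule.Quotient.mk (⟨x + y, hmem⟩ : Iaug K (FreeGroup X))
              : IaugMod3 K (FreeGroup X))
              = Submodule.Quotient.mk (⟨x, hxI⟩ : Iaug K (FreeGroup X))
                + Submodule.Quotient.mk (⟨y, hyI⟩ : Iaug K (FreeGroup X)) := by
            rw [← Submodule.Quotient.mk_add]
            rfl
          rw [hsplit]
          exact add_mem (hxr hxI) (hyr hyI)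
      exact (claim _ ha2).2 a.2
  · -- surjectivity of π
    intro y
    obtain ⟨a, rfl⟩ := Submodule.Quotient.mk_surjective _ y
    exact ⟨Submodule.Quotient.mk a, hπ a⟩
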